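/- arXiv:1002.1878 — 3 statements merged into one kernel-verified Lean document; each statement's English description precedes it below -/
import Mathlib

section
/- For any a, b ∈ ℕ, the range R_n of a random walk satisfies ℙ(R_n ≥ a + b) ≤ ℙ(R_n ≥ a) · ℙ(R_n ≥ b). -/
open MeasureTheory ProbabilityTheory Finset

/-- Number of distinct values of the walk with steps `u (j+·)` during the first `k` steps. -/
def walkR (u : ℕ → ℤ) (j k : ℕ) : ℕ :=
  ((Finset.range k).image (fun m => ∑ i ∈ Finset.range m, u (j + i))).card

lemma walkR_congr {u u' : ℕ → ℤ} {j k : ℕ} (h : ∀ i < k, u (j + i) = u' (j + i)) :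
    walkR u j k = walkR u' j k := by
  unfold walkR
  congr 1
  apply Finset.image_congr
  intro m hm
  simp only [Finset.mem_coe, Finset.mem_range] at hm
  exact Finset.sum_congr rfl fun i hi => h i (lt_of_lt_of_le (Finset.mem_range.1 hi) hm.le)

lemma walkR_mono (u : ℕ → ℤ) (j : ℕ) {k k' : ℕ} (h : k ≤ k') : walkR u j k ≤ walkR u j k' :=
  Finset.card_le_card (Finset.image_subset_image (Finset.range_subset_range.2 h))

lemma walkR_succ_le (u : ℕ → ℤ) (j k : ℕ) : walkR u j (k + 1) ≤ walkR u j k + 1 := by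
  unfold walkR
  rw [Finset.range_add_one, Finset.image_insert]
  exact Finset.card_insert_le _ _

lemma walkR_shift (u : ℕ → ℤ) (j k : ℕ) : walkR u j k = walkR (fun i => u (j + i)) 0 k := by
  unfold walkR
  congr 1
  apply Finset.image_congr
  intro m _
  exact Finset.sum_congr rfl fun i _ => by rw [zero_add]

lemma walkR_le (u : ℕ → ℤ) {j n : ℕ} (h : j ≤ n) :
    walkR u 0 n ≤ walkR u 0 j + walkR u j n := by
  set f : ℕ → ℤ := fun m => ∑ i ∈ Finset.range m, u (0 + i) with hf
  set g : ℕ → ℤ := fun m => ∑ i ∈ Finset.range m, u (j + i) with hg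
  have hfg : ∀ k, j ≤ k → f k = f j + g (k - j) := by
    intro k hk
    have h1 : f k = ∑ i ∈ Finset.range k, u i := Finset.sum_congr rfl fun i _ => by rw [zero_add]
    have h2 : f j = ∑ i ∈ Finset.range j, u i := Finset.sum_congr rfl fun i _ => by rw [zero_add]
    rw [h1, h2, Finset.range_eq_Ico, Finset.range_eq_Ico,
      ← Finset.sum_Ico_consecutive _ (Nat.zero_le j) hk]
    congr 1
    rw [Finset.sum_Ico_eq_sum_range]
  have hsplit : Finset.range n = Finset.range j ∪ Finset.Ico j n := by
    rw [Finset.range_eq_Ico, Finset.range_eq_Ico, Finset.Ico_union_Ico_eq_Ico (Nat.zero_le j) h]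
  have hsub : (Finset.Ico j n).image f ⊆ ((Finset.range n).image g).image (f j + ·) := by
    intro x hx
    rcases Finset.mem_image.1 hx with ⟨k, hk, rfl⟩
    rcases Finset.mem_Ico.1 hk with ⟨hk1, hk2⟩
    refine Finset.mem_image.2 ⟨g (k - j), Finset.mem_image.2 ⟨k - j, ?_, rfl⟩, (hfg k hk1).symm⟩
    exact Finset.mem_range.2 (lt_of_le_of_lt (Nat.sub_le k j) hk2)
  calc walkR u 0 n = ((Finset.range j ∪ Finset.Ico j n).image f).card := by
        rw [walkR, ← hsplit]
    _ ≤ ((Finset.range j).image f).card + ((Finset.Ico j n).image f).card := by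
        rw [Finset.image_union]; exact Finset.card_union_le _ _
    _ ≤ walkR u 0 j + walkR u j n := by
        refine Nat.add_le_add le_rfl ?_
        calc ((Finset.Ico j n).image f).card
            ≤ (((Finset.range n).image g).image (f j + ·)).card := Finset.card_le_card hsub
          _ = ((Finset.range n).image g).card :=
              Finset.card_image_of_injective _ (add_right_injective (f j))
          _ = walkR u j n := rfl
section Aux

variable {Ω : Type*} [MeasurableSpace Ω]

lemma measurable_walkR (X : ℕ → Ω → ℤ) (hmeas : ∀ i, Measurable (X i)) (j k : ℕ) :
    Measurable fun ω => walkR (fun i => X i ω) j k := by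
  have hcomp : (fun ω => walkR (fun i => X i ω) j k)
      = (fun v : Fin k → ℤ => walkR (fun i => if h : i - j < k then v ⟨i - j, h⟩ else 0) j k)
        ∘ (fun ω (i : Fin k) => X (j + i) ω) := by
    funext ω
    simp only [Function.comp]
    refine (walkR_congr ?_).symm
    intro i hi
    simp [Nat.add_sub_cancel_left, hi]
  rw [hcomp]
  exact (measurable_of_countable _).comp (measurable_pi_lambda _ fun i => hmeas _)

/-- the event that the range at time `j` is at least `a`, for the first time -/
def evA (X : ℕ → Ω → ℤ) (a j : ℕ) : Set Ω :=
  {ω | a ≤ walkR (fun i => X i ω) 0 j ∧ ∀ i < j, walkR (fun i' => X i' ω) 0 i < a}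

/-- the event that the range of the walk restarted at time `j`, run for `n` steps, is ≥ b -/
def evB (X : ℕ → Ω → ℤ) (b j n : ℕ) : Set Ω :=
  {ω | b ≤ walkR (fun i => X i ω) j n}

lemma evA_measurableSet (X : ℕ → Ω → ℤ) (hmeas : ∀ i, Measurable (X i)) (a j : ℕ) :
    MeasurableSet (evA X a j) := by
  have hw : ∀ k, Measurable fun ω => walkR (fun i => X i ω) 0 k :=
    fun k => measurable_walkR X hmeas 0 k
  have hrepr : evA X a j = (fun ω => walkR (fun i => X i ω) 0 j) ⁻¹' {m | a ≤ m} ∩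
      ⋂ i ∈ Finset.range j, (fun ω => walkR (fun i' => X i' ω) 0 i) ⁻¹' {m | m < a} := by
    ext ω
    simp [evA, Set.mem_iInter]
  rw [hrepr]
  exact ((hw j) ((Set.to_countable _).measurableSet)).inter
    (Finset.measurableSet_biInter _ fun i _ => (hw i) ((Set.to_countable _).measurableSet))

open MeasureTheory ProbabilityTheory in
lemma indep_AB (μ : Measure Ω) (X : ℕ → Ω → ℤ) (hmeas : ∀ i, Measurable (X i))
    (hindep : iIndepFun X μ) (a b j n : ℕ) :
    μ (evA X a j ∩ evB X b j n) = μ (evA X a j) * μ (evB X b j n) := by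
  classical
  set Φ : Ω → (↥(Finset.range j) → ℤ) := fun ω i => X i ω with hΦ
  set Ψ : Ω → (↥(Finset.Ico j (j + n)) → ℤ) := fun ω i => X i ω with hΨ
  have hST : Disjoint (Finset.range j) (Finset.Ico j (j + n)) := by
    simp only [Finset.disjoint_left, Finset.mem_range, Finset.mem_Ico]
    omega
  have hind : IndepFun Φ Ψ μ := hindep.indepFun_finset _ _ hST hmeas
  set sA : Set (↥(Finset.range j) → ℤ) :=
    {v | a ≤ walkR (fun i => if h : i ∈ Finset.range j then v ⟨i, h⟩ else 0) 0 j ∧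
      ∀ i < j, walkR (fun i' => if h : i' ∈ Finset.range j then v ⟨i', h⟩ else 0) 0 i < a}
    with hsA
  set sB : Set (↥(Finset.Ico j (j + n)) → ℤ) :=
    {w | b ≤ walkR (fun i => if h : i ∈ Finset.Ico j (j + n) then w ⟨i, h⟩ else 0) j n} with hsB
  have hAkey : ∀ (ω : Ω) k, k ≤ j →
      walkR (fun i => if h : i ∈ Finset.range j then Φ ω ⟨i, h⟩ else 0) 0 k
        = walkR (fun i => X i ω) 0 k := by
    intro ω k hk
    apply walkR_congr
    intro i hi
    have hmem : 0 + i ∈ Finset.range j := Finset.mem_range.2 (by omega)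
    rw [dif_pos hmem]
  have hA : evA X a j = Φ ⁻¹' sA := by
    ext ω
    simp only [evA, Set.mem_setOf_eq, Set.mem_preimage, hsA]
    constructor
    · rintro ⟨h1, h2⟩
      exact ⟨by rw [hAkey ω j le_rfl]; exact h1,
        fun i hi => by rw [hAkey ω i hi.le]; exact h2 i hi⟩
    · rintro ⟨h1, h2⟩
      rw [hAkey ω j le_rfl] at h1
      refine ⟨h1, fun i hi => ?_⟩
      have := h2 i hi
      rwa [hAkey ω i hi.le] at this
  have hBkey : ∀ ω : Ω,
      walkR (fun i => if h : i ∈ Finset.Ico j (j + n) then Ψ ω ⟨i, h⟩ else 0) j n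
        = walkR (fun i => X i ω) j n := by
    intro ω
    apply walkR_congr
    intro i hi
    have hmem : j + i ∈ Finset.Ico j (j + n) := Finset.mem_Ico.2 ⟨Nat.le_add_right _ _, by omega⟩
    rw [dif_pos hmem]
  have hB : evB X b j n = Ψ ⁻¹' sB := by
    ext ω
    simp only [evB, Set.mem_setOf_eq, Set.mem_preimage, hsB, hBkey]
  rw [hA, hB]
  exact hind.measure_inter_preimage_eq_mul _ _ ((Set.to_countable _).measurableSet)
    ((Set.to_countable _).measurableSet)

open MeasureTheory ProbabilityTheory in
lemma evB_measure (μ : Measure Ω) (X : ℕ → Ω → ℤ) (hmeas : ∀ i, Measurable (X i))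
    (hindep : iIndepFun X μ)
    (hident : ∀ i, IdentDistrib (X i) (X 0) μ μ) (b j n : ℕ) :
    μ (evB X b j n) = μ (evB X b 0 n) := by
  classical
  set V : ℕ → Ω → (Fin n → ℤ) := fun j' ω i => X (j' + i) ω with hV
  have hVmeas : ∀ j', Measurable (V j') := fun j' => measurable_pi_lambda _ fun i => hmeas _
  set s : Set (Fin n → ℤ) :=
    {w | b ≤ walkR (fun i => if h : i < n then w ⟨i, h⟩ else 0) 0 n} with hs
  have hBV : ∀ j', evB X b j' n = V j' ⁻¹' s := by
    intro j'
    ext ω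
    simp only [evB, Set.mem_setOf_eq, Set.mem_preimage, hs, hV]
    have hwc : walkR (fun i => if h : i < n then X (j' + i) ω else 0) 0 n
        = walkR (fun i => X i ω) j' n := by
      rw [walkR_shift (fun i => X i ω) j' n]
      apply walkR_congr
      intro i hi
      simp [hi]
    rw [hwc]
  have key : ∀ j' c, μ (V j' ⁻¹' {c})
      = ∏ i ∈ Finset.range n, μ (X 0 ⁻¹' {if h : i < n then c ⟨i, h⟩ else 0}) := by
    intro j' c
    have h1 : V j' ⁻¹' {c} = ⋂ k ∈ Finset.Ico j' (j' + n),
        X k ⁻¹' {if h : k - j' < n then c ⟨k - j', h⟩ else 0} := by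
      ext ω
      simp only [Set.mem_preimage, Set.mem_singleton_iff, Set.mem_iInter, Finset.mem_Ico, hV]
      constructor
      · rintro h k ⟨hk1, hk2⟩
        have hkn : k - j' < n := by omega
        rw [dif_pos hkn]
        have := congrFun h ⟨k - j', hkn⟩
        simpa [Nat.add_sub_cancel' hk1] using this
      · intro h
        funext i
        have hmem : j' ≤ j' + (i : ℕ) ∧ j' + (i : ℕ) < j' + n :=
          ⟨Nat.le_add_right _ _, by omega⟩
        have := h (j' + i) hmem
        rw [dif_pos (by omega : j' + (i : ℕ) - j' < n)] at this
        simpa [Nat.add_sub_cancel_left] using this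
    rw [h1, hindep.meas_biInter
      (fun k _ => ⟨{if h : k - j' < n then c ⟨k - j', h⟩ else 0}, measurableSet_singleton _, rfl⟩),
      Finset.prod_Ico_eq_prod_range]
    have hn : j' + n - j' = n := by omega
    rw [hn]
    refine Finset.prod_congr rfl fun i hi => ?_
    simp only [Nat.add_sub_cancel_left]
    exact (hident (j' + i)).measure_mem_eq (measurableSet_singleton _)
  have hmap : ∀ j', Measure.map (V j') μ = Measure.map (V 0) μ := by
    intro j'
    apply MeasureTheory.Measure.ext_of_singleton
    intro c
    rw [Measure.map_apply (hVmeas j') (measurableSet_singleton c),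
      Measure.map_apply (hVmeas 0) (measurableSet_singleton c), key j' c, key 0 c]
  rw [hBV j, hBV 0, ← Measure.map_apply (hVmeas j) ((Set.to_countable s).measurableSet),
    ← Measure.map_apply (hVmeas 0) ((Set.to_countable s).measurableSet), hmap j]

end Aux
/-- Submultiplicativity of the tail of the range of a random walk:
`ℙ(R_n ≥ a + b) ≤ ℙ(R_n ≥ a) ⬝ ℙ(R_n ≥ b)`. -/
theorem range_tail_submultiplicative
    {Ω : Type*} [MeasurableSpace Ω] (μ : Measure Ω) [IsProbabilityMeasure μ]
    (X : ℕ → Ω → ℤ) (hmeas : ∀ i, Measurable (X i))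
    (hindep : iIndepFun X μ)
    (hident : ∀ i, IdentDistrib (X i) (X 0) μ μ)
    (S : ℕ → Ω → ℤ) (hS : ∀ k ω, S k ω = ∑ i ∈ Finset.range k, X i ω)
    (R : ℕ → Ω → ℕ)
    (hR : ∀ n ω, R n ω = ((Finset.range n).image (fun k => S k ω)).card)
    (n : ℕ) (a b : ℕ) :
    μ {ω | a + b ≤ R n ω} ≤ μ {ω | a ≤ R n ω} * μ {ω | b ≤ R n ω} := by
  have hRw : ∀ k ω, R k ω = walkR (fun i => X i ω) 0 k := by
    intro k ω
    rw [hR]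
    unfold walkR
    congr 1
    apply Finset.image_congr
    intro m _
    show S m ω = ∑ i ∈ Finset.range m, X (0 + i) ω
    rw [hS]
    exact Finset.sum_congr rfl fun i _ => by rw [zero_add]
  rcases Nat.eq_zero_or_pos a with ha | ha
  · subst ha
    have h1 : {ω | 0 ≤ R n ω} = Set.univ := by ext ω; simp
    simp only [zero_add, h1, measure_univ, one_mul, le_refl]
  -- Main case: `a ≥ 1`.
  have hAiff : ∀ j (ω : Ω), ω ∈ evA X a j ↔ (a ≤ R j ω ∧ ∀ i < j, R i ω < a) := by
    intro j ω
    simp only [evA, Set.mem_setOf_eq, ← hRw]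
  have hBiff : ∀ j (ω : Ω), ω ∈ evB X b j n ↔ b ≤ walkR (fun i => X i ω) j n := by
    intro j ω
    simp only [evB, Set.mem_setOf_eq]
  have hmono : ∀ (ω : Ω) {k k' : ℕ}, k ≤ k' → R k ω ≤ R k' ω := by
    intro ω k k' h
    rw [hRw, hRw]
    exact walkR_mono _ _ h
  have hcover : {ω | a ≤ R n ω} = ⋃ j ∈ Finset.range (n + 1), evA X a j := by
    ext ω
    simp only [Set.mem_setOf_eq, Set.mem_iUnion, Finset.mem_range, exists_prop]
    constructor
    · intro h
      have hex : ∃ k, a ≤ R k ω := ⟨n, h⟩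
      exact ⟨Nat.find hex, Nat.lt_succ_of_le (Nat.find_min' hex h),
        (hAiff _ ω).2 ⟨Nat.find_spec hex, fun i hi => Nat.lt_of_not_le (Nat.find_min hex hi)⟩⟩
    · rintro ⟨j, hj, hja⟩
      exact le_trans ((hAiff j ω).1 hja).1 (hmono ω (Nat.lt_succ_iff.1 hj))
  have hdisj : (↑(Finset.range (n + 1)) : Set ℕ).PairwiseDisjoint (evA X a) := by
    intro j _ j' _ hne
    have hgen : ∀ k k' : ℕ, k < k' → Disjoint (evA X a k) (evA X a k') := by
      intro k k' hlt
      rw [Set.disjoint_left]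
      intro ω h1 h2
      have ha1 : a ≤ R k ω := ((hAiff k ω).1 h1).1
      have ha2 : R k ω < a := ((hAiff k' ω).1 h2).2 k hlt
      omega
    rcases hne.lt_or_gt with h | h
    · exact hgen j j' h
    · exact (hgen j' j h).symm
  have hsub : {ω | a + b ≤ R n ω} ⊆
      ⋃ j ∈ Finset.range (n + 1), (evA X a j ∩ evB X b j n) := by
    intro ω hω
    have hω' : a + b ≤ R n ω := hω
    have han : a ≤ R n ω := le_trans (Nat.le_add_right a b) hω'
    have hmem : ω ∈ ⋃ j ∈ Finset.range (n + 1), evA X a j := hcover ▸ han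
    simp only [Set.mem_iUnion, Finset.mem_range, exists_prop] at hmem
    obtain ⟨j, hj, hAj⟩ := hmem
    have hjn : j ≤ n := Nat.lt_succ_iff.1 hj
    obtain ⟨haj, hprev⟩ := (hAiff j ω).1 hAj
    have hj0 : 0 < j := by
      by_contra h0
      have hj0' : j = 0 := by omega
      have hR0 : R 0 ω = 0 := by rw [hR]; simp
      rw [hj0'] at haj
      omega
    have hRj : R j ω = a := by
      obtain ⟨m, rfl⟩ : ∃ m, j = m + 1 := ⟨j - 1, by omega⟩
      have h1 : R m ω < a := hprev m (Nat.lt_succ_self m)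
      have h2 : R (m + 1) ω ≤ R m ω + 1 := by
        rw [hRw, hRw]
        exact walkR_succ_le _ _ _
      omega
    have hBj : ω ∈ evB X b j n := by
      have hle : walkR (fun i => X i ω) 0 n
          ≤ walkR (fun i => X i ω) 0 j + walkR (fun i => X i ω) j n := walkR_le _ hjn
      rw [← hRw, ← hRw] at hle
      rw [hBiff]
      omega
    simp only [Set.mem_iUnion, Finset.mem_range, exists_prop]
    exact ⟨j, hj, hAj, hBj⟩
  have hB0 : evB X b 0 n = {ω | b ≤ R n ω} := by
    ext ω
    simp only [evB, Set.mem_setOf_eq, ← hRw]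
  calc μ {ω | a + b ≤ R n ω}
      ≤ μ (⋃ j ∈ Finset.range (n + 1), (evA X a j ∩ evB X b j n)) := measure_mono hsub
    _ ≤ ∑ j ∈ Finset.range (n + 1), μ (evA X a j ∩ evB X b j n) :=
        measure_biUnion_finset_le _ _
    _ = ∑ j ∈ Finset.range (n + 1), μ (evA X a j) * μ (evB X b j n) :=
        Finset.sum_congr rfl fun j _ => indep_AB μ X hmeas hindep a b j n
    _ = ∑ j ∈ Finset.range (n + 1), μ (evA X a j) * μ {ω | b ≤ R n ω} := by
        refine Finset.sum_congr rfl fun j _ => ?_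
        rw [evB_measure μ X hmeas hindep hident b j n, hB0]
    _ = μ (⋃ j ∈ Finset.range (n + 1), evA X a j) * μ {ω | b ≤ R n ω} := by
        rw [← Finset.sum_mul,
          measure_biUnion_finset hdisj (fun j _ => evA_measurableSet X hmeas a j)]
    _ = μ {ω | a ≤ R n ω} * μ {ω | b ≤ R n ω} := by rw [← hcover]
end

section
/- For any a, b ∈ ℕ, the maximal local time N_n^* = sup_y N_n(y) of a random walk satisfies ℙ(N_n^* ≥ a + b) ≤ ℙ(N_n^* ≥ a) · ℙ(N_n^* ≥ b). -/
open MeasureTheory ProbabilityTheory Finset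

namespace MLT

/-- maximal multiplicity of a value of `g` on `range m`. -/
def mc (g : ℕ → ℤ) (m : ℕ) : ℕ :=
  ((Finset.range m).image g).sup
    (fun y => ((Finset.range m).filter (fun k => g k = y)).card)

lemma count_le_mc (g : ℕ → ℤ) (m : ℕ) (y : ℤ) :
    ((Finset.range m).filter (fun k => g k = y)).card ≤ mc g m := by
  rcases ((Finset.range m).filter (fun k => g k = y)).eq_empty_or_nonempty with h | h
  · simp [h]
  · obtain ⟨k, hk⟩ := h
    simp only [mem_filter] at hk
    exact Finset.le_sup (f := fun y => ((Finset.range m).filter (fun k => g k = y)).card)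
      (Finset.mem_image.2 ⟨k, hk.1, hk.2⟩)

lemma mc_congr {g h : ℕ → ℤ} {m : ℕ} (H : ∀ k < m, g k = h k) : mc g m = mc h m := by
  unfold mc
  rw [show (Finset.range m).image g = (Finset.range m).image h from
    Finset.image_congr (fun k hk => H k (Finset.mem_range.1 (by simpa using hk)))]
  refine Finset.sup_congr rfl (fun y _ => ?_)
  rw [Finset.filter_congr (fun k hk => by rw [H k (Finset.mem_range.1 hk)])]

lemma mc_mono (g : ℕ → ℤ) {m n : ℕ} (h : m ≤ n) : mc g m ≤ mc g n := by
  refine Finset.sup_le (fun y _ => ?_)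
  calc ((Finset.range m).filter (fun k => g k = y)).card
      ≤ ((Finset.range n).filter (fun k => g k = y)).card :=
        Finset.card_le_card (Finset.filter_subset_filter _
          (Finset.range_subset_range.2 h))
    _ ≤ mc g n := count_le_mc g n y

lemma mc_succ (g : ℕ → ℤ) (t : ℕ) : mc g (t + 1) ≤ mc g t + 1 := by
  refine Finset.sup_le (fun y _ => ?_)
  rw [Finset.range_add_one, Finset.filter_insert]
  split_ifs with h
  · exact (Finset.card_insert_le _ _).trans (by simpa using count_le_mc g t y)
  · exact (count_le_mc g t y).trans (Nat.le_succ _)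

lemma mc_subadd (g : ℕ → ℤ) {t n : ℕ} (h : t ≤ n) :
    mc g n ≤ mc g t + mc (fun j => g (t + j) - g t) (n - t) := by
  refine Finset.sup_le (fun y _ => ?_)
  have hsplit : Finset.range n = Finset.range t ∪ Finset.Ico t n := by
    rw [Finset.range_eq_Ico, ← Finset.Ico_union_Ico_eq_Ico (Nat.zero_le t) h,
      ← Finset.range_eq_Ico]
  have hdisj : Disjoint (Finset.range t) (Finset.Ico t n) := by
    simp only [Finset.disjoint_left, Finset.mem_range, Finset.mem_Ico]
    omega
  rw [hsplit, Finset.filter_union,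
    Finset.card_union_of_disjoint (Finset.disjoint_filter_filter hdisj)]
  have h2 : ((Finset.Ico t n).filter (fun k => g k = y)).card
      ≤ mc (fun j => g (t + j) - g t) (n - t) := by
    have himg : Finset.Ico t n = (Finset.range (n - t)).image (fun j => t + j) := by
      rw [Finset.range_eq_Ico, Finset.image_add_left_Ico]
      congr 1
      omega
    rw [himg, Finset.filter_image, Finset.card_image_of_injective _ (fun x y => by omega)]
    have : ((Finset.range (n - t)).filter (fun j => g (t + j) = y)).card
        = ((Finset.range (n - t)).filter (fun j => g (t + j) - g t = y - g t)).card := by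
      congr 1
      exact Finset.filter_congr (fun k _ => by constructor <;> intro <;> omega)
    rw [this]
    exact count_le_mc _ _ _
  exact Nat.add_le_add (count_le_mc g t y) h2

end MLT

namespace MLT

variable {Ω : Type*} [MeasurableSpace Ω] {μ : Measure Ω}

lemma map_tuple [IsProbabilityMeasure μ] (X : ℕ → Ω → ℤ) (hmeas : ∀ i, Measurable (X i))
    (hindep : iIndepFun X μ)
    (hident : ∀ i, IdentDistrib (X i) (X 0) μ μ) (s m : ℕ) :
    Measure.map (fun ω (i : Fin m) => X (s + i) ω) μ
      = Measure.pi (fun _ : Fin m => Measure.map (X 0) μ) := by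
  haveI : IsProbabilityMeasure (Measure.map (X 0) μ) :=
    Measure.isProbabilityMeasure_map (hmeas 0).aemeasurable
  refine (Measure.pi_eq fun c hc => ?_).symm
  have hJ : Measurable (fun ω (i : Fin m) => X (s + i) ω) :=
    measurable_pi_lambda _ (fun i => hmeas _)
  rw [Measure.map_apply hJ (MeasurableSet.univ_pi hc)]
  set C' : ℕ → Set ℤ := fun j => if h : j - s < m then c ⟨j - s, h⟩ else Set.univ with hC'
  have hCval : ∀ i : Fin m, C' (s + (i : ℕ)) = c i := by
    intro i
    have h1 : s + (i : ℕ) - s = (i : ℕ) := by omega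
    simp only [hC', h1, i.isLt, dif_pos]
  have hpre : (fun ω (i : Fin m) => X (s + i) ω) ⁻¹' Set.pi Set.univ c
      = ⋂ j ∈ ((Finset.range m).map ⟨fun i => s + i, add_right_injective s⟩),
          X j ⁻¹' C' j := by
    ext ω
    simp only [Set.mem_preimage, Set.mem_pi, Set.mem_univ, forall_true_left,
      Set.mem_iInter, Finset.mem_map, Finset.mem_range, Function.Embedding.coeFn_mk]
    constructor
    · rintro h j ⟨i, hi, rfl⟩
      have := h ⟨i, hi⟩
      rw [← hCval ⟨i, hi⟩] at this
      exact this
    · intro h i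
      have := h (s + (i : ℕ)) ⟨i, i.isLt, rfl⟩
      rwa [hCval i] at this
  rw [hpre, hindep.meas_biInter
    (fun j _ => ⟨C' j, Set.Countable.measurableSet (Set.to_countable _), rfl⟩),
    Finset.prod_map]
  simp only [Function.Embedding.coeFn_mk]
  rw [← Fin.prod_univ_eq_prod_range (fun i => μ ((fun a => X (s + i) a) ⁻¹' C' (s + i)))]
  refine Finset.prod_congr rfl (fun i _ => ?_)
  rw [hCval i, (hident (s + i)).map_eq.symm,
    Measure.map_apply (hmeas _) (Set.Countable.measurableSet (Set.to_countable _))]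

end MLT

open MeasureTheory ProbabilityTheory Finset

/-- Submultiplicativity of the tail of the maximal local time of a random walk:
`ℙ(N_n^* ≥ a + b) ≤ ℙ(N_n^* ≥ a) ⬝ ℙ(N_n^* ≥ b)`. -/
theorem maximal_local_time_tail_submultiplicative
    {Ω : Type*} [MeasurableSpace Ω] (μ : Measure Ω) [IsProbabilityMeasure μ]
    (X : ℕ → Ω → ℤ) (hmeas : ∀ i, Measurable (X i))
    (hindep : iIndepFun X μ)
    (hident : ∀ i, IdentDistrib (X i) (X 0) μ μ)
    (S : ℕ → Ω → ℤ) (hS : ∀ k ω, S k ω = ∑ i ∈ Finset.range k, X i ω)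
    (Nstar : ℕ → Ω → ℕ)
    (hNstar : ∀ n ω, Nstar n ω =
      ((Finset.range n).image (fun k => S k ω)).sup
        (fun y => ((Finset.range n).filter (fun k => S k ω = y)).card))
    (n : ℕ) (a b : ℕ) :
    μ {ω | a + b ≤ Nstar n ω} ≤ μ {ω | a ≤ Nstar n ω} * μ {ω | b ≤ Nstar n ω} := by
  classical
  have hN : ∀ m ω, Nstar m ω = MLT.mc (fun k => S k ω) m := hNstar
  have hmono : ∀ (ω : Ω) {m m' : ℕ}, m ≤ m' → Nstar m ω ≤ Nstar m' ω := by
    intro ω m m' h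
    rw [hN, hN]; exact MLT.mc_mono _ h
  -- trivial cases
  rcases Nat.eq_zero_or_pos a with rfl | ha
  · have h1 : {ω : Ω | 0 ≤ Nstar n ω} = Set.univ := by ext ω; simp
    rw [zero_add, h1, measure_univ, one_mul]
  rcases Nat.eq_zero_or_pos b with rfl | hb
  · have h1 : {ω : Ω | 0 ≤ Nstar n ω} = Set.univ := by ext ω; simp
    rw [add_zero, h1, measure_univ, mul_one]
  -- shifted increments
  have hshift : ∀ (s j : ℕ) (ω : Ω),
      S (s + j) ω - S s ω = ∑ i ∈ Finset.range j, X (s + i) ω := by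
    intro s j ω
    have h1 : ∑ i ∈ Finset.Ico s (s + j), X i ω = ∑ i ∈ Finset.range j, X (s + i) ω := by
      rw [Finset.sum_Ico_eq_sum_range, Nat.add_sub_cancel_left]
    have h2 : ∑ i ∈ Finset.range (s + j), X i ω
        = ∑ i ∈ Finset.range s, X i ω + ∑ i ∈ Finset.Ico s (s + j), X i ω := by
      rw [Finset.range_eq_Ico,
        ← Finset.sum_Ico_consecutive _ (Nat.zero_le s) (Nat.le_add_right s j), ← Finset.range_eq_Ico]
    rw [hS, hS, h2, h1]; ring
  -- post local time
  set post : ℕ → ℕ → Ω → ℕ :=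
    fun s m ω => MLT.mc (fun j => ∑ i ∈ Finset.range j, X (s + i) ω) m with hpost
  -- first-entry events
  set E : ℕ → Set Ω := fun t => {ω | a ≤ Nstar (t + 1) ω ∧ Nstar t ω < a} with hE
  have hcover : {ω | a ≤ Nstar n ω} = ⋃ t ∈ Finset.range n, E t := by
    ext ω
    simp only [Set.mem_setOf_eq, Set.mem_iUnion, Finset.mem_range, hE, exists_prop]
    constructor
    · intro h
      have hex : ∃ s, a ≤ Nstar s ω := ⟨n, h⟩
      have h0 : Nstar 0 ω = 0 := by rw [hN]; simp [MLT.mc]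
      have htpos : Nat.find hex ≠ 0 := by
        intro h'
        have := Nat.find_spec hex
        rw [h', h0] at this; omega
      have htle : Nat.find hex ≤ n := Nat.find_le h
      refine ⟨Nat.find hex - 1, by omega, ?_, ?_⟩
      · have := Nat.find_spec hex
        have h2 : Nat.find hex - 1 + 1 = Nat.find hex := by omega
        rwa [h2]
      · by_contra h'
        have h'' : a ≤ Nstar (Nat.find hex - 1) ω := by omega
        exact Nat.find_min hex (by omega : Nat.find hex - 1 < Nat.find hex) h''
    · rintro ⟨t, htn, h1, h2⟩
      exact le_trans h1 (hmono ω (by omega))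
  -- subadditivity: on E t, a+b ≤ Nstar n forces b ≤ post
  have hsub : ∀ t, t < n → ∀ ω, ω ∈ E t → a + b ≤ Nstar n ω →
      b ≤ post (t + 1) (n - (t + 1)) ω := by
    intro t ht ω hωE hab
    obtain ⟨hE1, hE2⟩ := hωE
    have h1 : Nstar (t + 1) ω ≤ a := by
      have h := MLT.mc_succ (fun k => S k ω) t
      rw [← hN, ← hN] at h
      omega
    have h2 : Nstar n ω ≤ Nstar (t + 1) ω + post (t + 1) (n - (t + 1)) ω := by
      rw [hN, hN]
      refine (MLT.mc_subadd (fun k => S k ω) (show t + 1 ≤ n by omega)).trans ?_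
      have heq : (fun j => S (t + 1 + j) ω - S (t + 1) ω)
          = fun j => ∑ i ∈ Finset.range j, X (t + 1 + i) ω :=
        funext (fun j => hshift (t + 1) j ω)
      rw [heq]
    omega
  -- measurability and independence, per t
  have hmeasE : ∀ t : ℕ, MeasurableSet (E t) ∧
      ∀ m' : ℕ, μ (E t ∩ {ω | b ≤ post (t + 1) m' ω})
        = μ (E t) * μ {ω | b ≤ post (t + 1) m' ω} := by
    intro t
    set A : Ω → (↥(Finset.range (t + 1)) → ℤ) := fun ω i => X (i : ℕ) ω with hA
    have hAmeas : Measurable A := measurable_pi_lambda _ (fun i => hmeas _)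
    set ext1 : (↥(Finset.range (t + 1)) → ℤ) → ℕ → ℤ :=
      fun v i => if h : i ∈ Finset.range (t + 1) then v ⟨i, h⟩ else 0 with hext1
    set s₁ : Set (↥(Finset.range (t + 1)) → ℤ) :=
      {v | a ≤ MLT.mc (fun k => ∑ i ∈ Finset.range k, ext1 v i) (t + 1)
        ∧ MLT.mc (fun k => ∑ i ∈ Finset.range k, ext1 v i) t < a} with hs₁
    have hext1X : ∀ (ω : Ω) (k : ℕ), k ≤ t + 1 →
        (∑ i ∈ Finset.range k, ext1 (A ω) i) = S k ω := by
      intro ω k hk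
      rw [hS]
      refine Finset.sum_congr rfl (fun i hi => ?_)
      have hi' : i ∈ Finset.range (t + 1) := by
        simp only [Finset.mem_range] at hi ⊢; omega
      simp only [hext1, hA, dif_pos hi']
    have hEA : E t = A ⁻¹' s₁ := by
      ext ω
      simp only [hE, Set.mem_setOf_eq, Set.mem_preimage, hs₁]
      have e1 : MLT.mc (fun k => ∑ i ∈ Finset.range k, ext1 (A ω) i) (t + 1)
          = Nstar (t + 1) ω := by
        rw [hN]
        exact MLT.mc_congr (fun k hk => hext1X ω k (by omega))
      have e2 : MLT.mc (fun k => ∑ i ∈ Finset.range k, ext1 (A ω) i) t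
          = Nstar t ω := by
        rw [hN]
        exact MLT.mc_congr (fun k hk => hext1X ω k (by omega))
      rw [e1, e2]
    have hs₁meas : MeasurableSet s₁ := Set.Countable.measurableSet (Set.to_countable _)
    refine ⟨hEA ▸ hAmeas hs₁meas, fun m' => ?_⟩
    -- second tuple
    set T : Finset ℕ := Finset.Ico (t + 1) (t + 1 + m') with hT
    set B : Ω → (↥T → ℤ) := fun ω i => X (i : ℕ) ω with hB
    have hBmeas : Measurable B := measurable_pi_lambda _ (fun i => hmeas _)
    set ext2 : (↥T → ℤ) → ℕ → ℤ :=
      fun v i => if h : i ∈ T then v ⟨i, h⟩ else 0 with hext2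
    set s₂ : Set (↥T → ℤ) :=
      {v | b ≤ MLT.mc (fun j => ∑ i ∈ Finset.range j, ext2 v (t + 1 + i)) m'} with hs₂
    have hPB : {ω | b ≤ post (t + 1) m' ω} = B ⁻¹' s₂ := by
      ext ω
      simp only [Set.mem_setOf_eq, Set.mem_preimage, hs₂, hpost]
      have e : MLT.mc (fun j => ∑ i ∈ Finset.range j, ext2 (B ω) (t + 1 + i)) m'
          = MLT.mc (fun j => ∑ i ∈ Finset.range j, X (t + 1 + i) ω) m' := by
        refine MLT.mc_congr (fun j hj => ?_)
        refine Finset.sum_congr rfl (fun i hi => ?_)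
        have hi' : t + 1 + i ∈ T := by
          simp only [hT, Finset.mem_Ico]
          simp only [Finset.mem_range] at hi
          omega
        simp only [hext2, hB, dif_pos hi']
      rw [e]
    have hs₂meas : MeasurableSet s₂ := Set.Countable.measurableSet (Set.to_countable _)
    have hdisj : Disjoint (Finset.range (t + 1)) T := by
      simp only [hT, Finset.disjoint_left, Finset.mem_range, Finset.mem_Ico]
      omega
    have hind := hindep.indepFun_finset (Finset.range (t + 1)) T hdisj hmeas
    have := hind.measure_inter_preimage_eq_mul _ _ hs₁meas hs₂meas
    rw [hEA, hPB]
    exact this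
  -- identical distribution: law of post equals law of Nstar
  have hidpost : ∀ s m : ℕ,
      μ {ω | b ≤ post s m ω} = μ {ω | b ≤ Nstar m ω} := by
    intro s m
    set extF : (Fin m → ℤ) → ℕ → ℤ :=
      fun v i => if h : i < m then v ⟨i, h⟩ else 0 with hextF
    set C : Set (Fin m → ℤ) :=
      {v | b ≤ MLT.mc (fun j => ∑ i ∈ Finset.range j, extF v i) m} with hC
    have hCmeas : MeasurableSet C := Set.Countable.measurableSet (Set.to_countable _)
    have key : ∀ s' : ℕ, {ω | b ≤ post s' m ω}
        = (fun ω (i : Fin m) => X (s' + i) ω) ⁻¹' C := by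
      intro s'
      ext ω
      simp only [Set.mem_setOf_eq, Set.mem_preimage, hC, hpost]
      have e : MLT.mc (fun j => ∑ i ∈ Finset.range j,
            extF (fun i : Fin m => X (s' + i) ω) i) m
          = MLT.mc (fun j => ∑ i ∈ Finset.range j, X (s' + i) ω) m := by
        refine MLT.mc_congr (fun j hj => ?_)
        refine Finset.sum_congr rfl (fun i hi => ?_)
        have hi' : i < m := by
          simp only [Finset.mem_range] at hi; omega
        simp only [hextF, dif_pos hi']
      rw [e]
    have hNm : {ω | b ≤ Nstar m ω} = {ω | b ≤ post 0 m ω} := by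
      ext ω
      simp only [Set.mem_setOf_eq, hpost, hN]
      have e : MLT.mc (fun k => S k ω) m
          = MLT.mc (fun j => ∑ i ∈ Finset.range j, X (0 + i) ω) m := by
        refine MLT.mc_congr (fun k hk => ?_)
        rw [hS]
        exact Finset.sum_congr rfl (fun i _ => by rw [Nat.zero_add])
      rw [e]
    rw [hNm, key s, key 0]
    have hJ : ∀ s' : ℕ, Measurable (fun ω (i : Fin m) => X (s' + i) ω) :=
      fun s' => measurable_pi_lambda _ (fun i => hmeas _)
    rw [← Measure.map_apply (hJ s) hCmeas, ← Measure.map_apply (hJ 0) hCmeas,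
      MLT.map_tuple X hmeas hindep hident s m, MLT.map_tuple X hmeas hindep hident 0 m]
  -- final chain
  have hdisjE : (↑(Finset.range n) : Set ℕ).PairwiseDisjoint E := by
    intro t ht t' ht' hne
    wlog hlt : t < t' generalizing t t'
    · exact (this ht' ht hne.symm (by omega)).symm
    refine Set.disjoint_left.2 (fun ω h1 h2 => ?_)
    have hm := hmono ω (show t + 1 ≤ t' by omega)
    have ha1 := h1.1
    have ha2 := h2.2
    omega
  calc μ {ω | a + b ≤ Nstar n ω}
      = μ (⋃ t ∈ Finset.range n, E t ∩ {ω | a + b ≤ Nstar n ω}) := by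
        congr 1
        rw [← Set.iUnion₂_inter, ← hcover]
        ext ω
        simp only [Set.mem_inter_iff, Set.mem_setOf_eq]
        exact ⟨fun h => ⟨le_trans (by omega) h, h⟩, fun h => h.2⟩
    _ ≤ ∑ t ∈ Finset.range n, μ (E t ∩ {ω | a + b ≤ Nstar n ω}) :=
        measure_biUnion_finset_le _ _
    _ ≤ ∑ t ∈ Finset.range n, μ (E t ∩ {ω | b ≤ post (t + 1) (n - (t + 1)) ω}) := by
        refine Finset.sum_le_sum (fun t ht => measure_mono (fun ω hω => ?_))
        exact ⟨hω.1, hsub t (Finset.mem_range.1 ht) ω hω.1 hω.2⟩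
    _ = ∑ t ∈ Finset.range n, μ (E t) * μ {ω | b ≤ post (t + 1) (n - (t + 1)) ω} :=
        Finset.sum_congr rfl (fun t _ => (hmeasE t).2 _)
    _ ≤ ∑ t ∈ Finset.range n, μ (E t) * μ {ω | b ≤ Nstar n ω} := by
        refine Finset.sum_le_sum (fun t _ => ?_)
        rw [hidpost]
        refine mul_le_mul_right (measure_mono (fun ω hω => ?_)) _
        exact le_trans hω (hmono ω (by omega))
    _ = (∑ t ∈ Finset.range n, μ (E t)) * μ {ω | b ≤ Nstar n ω} :=
        (Finset.sum_mul _ _ _).symm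
    _ = μ (⋃ t ∈ Finset.range n, E t) * μ {ω | b ≤ Nstar n ω} := by
        rw [measure_biUnion_finset hdisjE (fun t _ => (hmeasE t).1)]
    _ = μ {ω | a ≤ Nstar n ω} * μ {ω | b ≤ Nstar n ω} := by rw [← hcover]
end

section
/- Let Z be a ℤ-valued random variable equal to ∑_y ξ_y N(y) where (ξ_y) are i.i.d. ℤ-valued with characteristic function φ_ξ and {u : |φ_ξ(u)| = 1} = (2π/d)ℤ, N: ℤ → ℕ finitely supported with ∑_y N(y) = n. Fix x ∈ ℤ. If ℙ(nξ_1 − x ∉ dℤ) = 1 then ℙ(Z = x) = 0; if ℙ(nξ_1 − x ∈ dℤ) = 1 then ℙ(Z = x) = (d/2π) ∫_{−π/d}^{π/d} e^{−itx} ∏_y φ_ξ(t N(y)) dt. -/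
open MeasureTheory ProbabilityTheory

lemma my_indep_integral_mul {Ω α β : Type*} [MeasurableSpace Ω] [MeasurableSpace α]
    [MeasurableSpace β] (μ : Measure Ω) [IsProbabilityMeasure μ]
    {X : Ω → α} {Y : Ω → β} (hX : Measurable X) (hY : Measurable Y)
    (h : IndepFun X Y μ) {f : α → ℂ} {g : β → ℂ} (hf : Measurable f) (hg : Measurable g) :
    ∫ ω, f (X ω) * g (Y ω) ∂μ = (∫ ω, f (X ω) ∂μ) * ∫ ω, g (Y ω) ∂μ := by
  have hmap := (indepFun_iff_map_prod_eq_prod_map_map hX.aemeasurable hY.aemeasurable).1 h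
  haveI : IsProbabilityMeasure (μ.map X) := Measure.isProbabilityMeasure_map hX.aemeasurable
  haveI : IsProbabilityMeasure (μ.map Y) := Measure.isProbabilityMeasure_map hY.aemeasurable
  have hmb : Measurable fun p : α × β => f p.1 * g p.2 :=
    (hf.comp measurable_fst).mul (hg.comp measurable_snd)
  have h1 : ∫ ω, f (X ω) * g (Y ω) ∂μ
      = ∫ p, f p.1 * g p.2 ∂(μ.map fun ω => (X ω, Y ω)) :=
    (integral_map (hX.prodMk hY).aemeasurable hmb.aestronglyMeasurable).symm
  rw [h1, hmap, integral_prod_mul, integral_map hX.aemeasurable hf.aestronglyMeasurable,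
    integral_map hY.aemeasurable hg.aestronglyMeasurable]

lemma my_indep_integral_prod {Ω : Type*} [MeasurableSpace Ω]
    (μ : Measure Ω) [IsProbabilityMeasure μ]
    (ξ : ℤ → Ω → ℤ) (hmeas : ∀ y, Measurable (ξ y))
    (hindep : iIndepFun ξ μ)
    (f : ℤ → ℤ → ℂ) (s : Finset ℤ) :
    ∫ ω, ∏ y ∈ s, f y (ξ y ω) ∂μ = ∏ y ∈ s, ∫ ω, f y (ξ y ω) ∂μ := by
  classical
  induction s using Finset.cons_induction with
  | empty => simp
  | cons a s ha ih =>
    have hY : Measurable (fun ω (i : s) => ξ i ω) :=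
      measurable_pi_lambda _ fun i => hmeas i
    have hI : IndepFun (ξ a) (fun ω (i : s) => ξ i ω) μ := by
      have h2 := hindep.indepFun_finset {a} s (by simpa using ha) hmeas
      have h3 := h2.comp (measurable_pi_apply (⟨a, Finset.mem_singleton_self a⟩ : ({a} : Finset ℤ)))
        measurable_id
      exact h3
    have key := my_indep_integral_mul μ (hmeas a) hY hI
      (f := f a) (g := fun v : (i : s) → ℤ => ∏ i ∈ s.attach, f i (v i))
      Measurable.of_discrete
      (Finset.measurable_prod _ fun i _ => Measurable.of_discrete.comp (measurable_pi_apply i))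
    have e1 : ∀ ω, (∏ i ∈ s.attach, f i (ξ i ω)) = ∏ y ∈ s, f y (ξ y ω) := fun ω =>
      Finset.prod_attach s (fun y => f y (ξ y ω))
    have e2 : (∫ ω, f a (ξ a ω) * ∏ i ∈ s.attach, f i (ξ i ω) ∂μ)
        = (∫ ω, f a (ξ a ω) ∂μ) * ∫ ω, ∏ i ∈ s.attach, f i (ξ i ω) ∂μ := key
    simp only [e1] at e2
    simp only [Finset.prod_cons]
    rw [← ih]
    exact e2

lemma my_unit_eq {z w : ℂ} (hz : ‖z‖ = 1) (hw : ‖w‖ = 1)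
    (h : ((starRingEnd ℂ) z * w).re = 1) : w = z := by
  have hu : ‖(starRingEnd ℂ) z * w‖ = 1 := by
    rw [norm_mul, RCLike.norm_conj, hz, hw, one_mul]
  set u := (starRingEnd ℂ) z * w with hu'
  have hsq : u.re ^ 2 + u.im ^ 2 = 1 := by
    have h1 := Complex.sq_norm u
    have h2 := Complex.normSq_apply u
    nlinarith
  have him : u.im = 0 := by nlinarith
  have hu1 : u = 1 := Complex.ext (by simpa using h) (by simpa using him)
  have hzz : z * u = w := by
    rw [hu', ← mul_assoc, Complex.mul_conj]
    have : Complex.normSq z = 1 := by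
      have := Complex.sq_norm z
      nlinarith
    rw [this]
    simp
  rw [hu1, mul_one] at hzz
  exact hzz.symm

set_option maxHeartbeats 2000000 in
/-- Fourier inversion identity for `Z = ∑_y ξ_y N(y)` with i.i.d. lattice
scenery `ξ`: if a.s. `nξ_1 - x ∉ dℤ` then `ℙ(Z = x) = 0`; if a.s.
`nξ_1 - x ∈ dℤ` then
`ℙ(Z = x) = (d/2π) ∫_{-π/d}^{π/d} e^{-itx} ∏_y φ_ξ(t N(y)) dt`. -/
theorem rwrs_fourier_inversion
    {Ω : Type*} [MeasurableSpace Ω] (μ : Measure Ω) [IsProbabilityMeasure μ]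
    (ξ : ℤ → Ω → ℤ) (hmeas : ∀ y, Measurable (ξ y))
    (hindep : iIndepFun ξ μ)
    (hident : ∀ y, IdentDistrib (ξ y) (ξ 0) μ μ)
    (φ : ℝ → ℂ)
    (hφ : ∀ u : ℝ, φ u = ∫ ω, Complex.exp ((u * (ξ 0 ω : ℝ) : ℝ) * Complex.I) ∂μ)
    (d : ℕ) (hd : 1 ≤ d)
    (hlat : {u : ℝ | ‖φ u‖ = 1} = {u : ℝ | ∃ k : ℤ, u = 2 * Real.pi * k / d})
    (N : ℤ →₀ ℕ) (n : ℕ) (hn : ∑ y ∈ N.support, N y = n)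
    (Z : Ω → ℤ) (hZ : ∀ ω, Z ω = ∑ y ∈ N.support, ξ y ω * (N y : ℤ))
    (x : ℤ) :
    ((∀ᵐ ω ∂μ, ¬ ((d : ℤ) ∣ ((n : ℤ) * ξ 0 ω - x))) → μ {ω | Z ω = x} = 0) ∧
    ((∀ᵐ ω ∂μ, (d : ℤ) ∣ ((n : ℤ) * ξ 0 ω - x)) →
      ((μ {ω | Z ω = x}).toReal : ℂ) =
        ((d : ℂ) / (2 * (Real.pi : ℂ))) *
          ∫ t in Set.Ioc (-(Real.pi / d)) (Real.pi / d),
            Complex.exp ((-(t * (x : ℝ)) : ℝ) * Complex.I) *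
              ∏ y ∈ N.support, φ (t * (N y : ℝ))) := by

  classical
  have hπ : (0:ℝ) < Real.pi := Real.pi_pos
  have hdpos : 0 < d := hd
  have hd0 : (0:ℝ) < (d:ℝ) := by exact_mod_cast hdpos
  have hdne : (d:ℝ) ≠ 0 := ne_of_gt hd0
  have hdC : (d:ℂ) ≠ 0 := Nat.cast_ne_zero.2 (by omega)
  have hZmeas : Measurable Z := by
    have hfe : Z = fun ω => ∑ y ∈ N.support, ξ y ω * (N y:ℤ) := funext hZ
    rw [hfe]
    exact Finset.measurable_sum _ fun y _ =>
      (Measurable.of_discrete (f := fun z : ℤ => z * (N y : ℤ))).comp (hmeas y)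
  -- the unimodular random variable W and ζ
  have hWmeas : Measurable (fun ω => Complex.exp ((((2 * Real.pi / d) * (ξ 0 ω : ℝ) : ℝ)) * Complex.I)) := by
    apply Complex.measurable_exp.comp
    exact (Complex.measurable_ofReal.comp
      (measurable_const.mul ((Measurable.of_discrete (f := fun z : ℤ => (z:ℝ))).comp (hmeas 0)))).mul_const _
  have hWnorm : ∀ ω, ‖Complex.exp ((((2 * Real.pi / d) * (ξ 0 ω : ℝ) : ℝ)) * Complex.I)‖ = 1 := by
    intro ω
    rw [Complex.norm_exp_ofReal_mul_I]
  set ζ : ℂ := φ (2 * Real.pi / d) with hζdef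
  have hζnorm : ‖ζ‖ = 1 := by
    have hmem : (2*Real.pi/d) ∈ {u : ℝ | ‖φ u‖ = 1} := by
      rw [hlat]
      exact ⟨1, by push_cast; ring⟩
    exact hmem
  have hbint : ∀ (g : Ω → ℂ), Measurable g → (∀ ω, ‖g ω‖ ≤ 1) → Integrable g μ := fun g hg hb =>
    (integrable_const (1:ℝ)).mono' hg.aestronglyMeasurable (ae_of_all _ hb)
  have hWint : Integrable (fun ω => Complex.exp ((((2 * Real.pi / d) * (ξ 0 ω : ℝ) : ℝ)) * Complex.I)) μ :=
    hbint _ hWmeas (fun ω => le_of_eq (hWnorm ω))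
  have hζint : ζ = ∫ ω, Complex.exp ((((2 * Real.pi / d) * (ξ 0 ω : ℝ) : ℝ)) * Complex.I) ∂μ := hφ _
  -- a.e. W = ζ
  have hWζ : ∀ᵐ ω ∂μ, Complex.exp ((((2 * Real.pi / d) * (ξ 0 ω : ℝ) : ℝ)) * Complex.I) = ζ := by
    have hint2 : Integrable (fun ω => (starRingEnd ℂ) ζ *
        Complex.exp ((((2 * Real.pi / d) * (ξ 0 ω : ℝ) : ℝ)) * Complex.I)) μ := hWint.const_mul _
    have hre1 : ∀ ω, ((starRingEnd ℂ) ζ *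
        Complex.exp ((((2 * Real.pi / d) * (ξ 0 ω : ℝ) : ℝ)) * Complex.I)).re ≤ 1 := by
      intro ω
      calc ((starRingEnd ℂ) ζ * _).re ≤ ‖_‖ := Complex.re_le_norm _
        _ = ‖(starRingEnd ℂ) ζ * Complex.exp ((((2 * Real.pi / d) * (ξ 0 ω : ℝ) : ℝ)) * Complex.I)‖ :=
            rfl
        _ = 1 := by rw [norm_mul, RCLike.norm_conj, hζnorm, hWnorm, one_mul]
    have hnonneg : ∀ ω, 0 ≤ 1 - ((starRingEnd ℂ) ζ *
        Complex.exp ((((2 * Real.pi / d) * (ξ 0 ω : ℝ) : ℝ)) * Complex.I)).re := fun ω =>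
      sub_nonneg.2 (hre1 ω)
    have hintre : Integrable (fun ω => ((starRingEnd ℂ) ζ *
        Complex.exp ((((2 * Real.pi / d) * (ξ 0 ω : ℝ) : ℝ)) * Complex.I)).re) μ := by
      have := hint2.re
      simpa using this
    have hiz : ∫ ω, (1 - ((starRingEnd ℂ) ζ *
        Complex.exp ((((2 * Real.pi / d) * (ξ 0 ω : ℝ) : ℝ)) * Complex.I)).re) ∂μ = 0 := by
      rw [integral_sub (integrable_const 1) hintre]
      have hre2 : ∫ ω, ((starRingEnd ℂ) ζ *
          Complex.exp ((((2 * Real.pi / d) * (ξ 0 ω : ℝ) : ℝ)) * Complex.I)).re ∂μ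
          = (∫ ω, (starRingEnd ℂ) ζ *
          Complex.exp ((((2 * Real.pi / d) * (ξ 0 ω : ℝ) : ℝ)) * Complex.I) ∂μ).re := by
        have := integral_re (𝕜 := ℂ) hint2
        simpa using this
      rw [hre2, integral_const_mul, ← hζint]
      have : (starRingEnd ℂ) ζ * ζ = Complex.normSq ζ := by
        rw [mul_comm, Complex.mul_conj]
      rw [this]
      have hns : Complex.normSq ζ = 1 := by
        have := Complex.sq_norm ζ
        nlinarith
      simp [hns]
    have hae0 := (integral_eq_zero_iff_of_nonneg (fun ω => hnonneg ω) ((integrable_const 1).sub hintre)).1 hiz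
    filter_upwards [hae0] with ω hω
    have : ((starRingEnd ℂ) ζ *
        Complex.exp ((((2 * Real.pi / d) * (ξ 0 ω : ℝ) : ℝ)) * Complex.I)).re = 1 := by
      have := hω
      simp only [Pi.zero_apply] at this
      linarith [this]
    exact my_unit_eq hζnorm (hWnorm ω) this
  haveI : (ae μ).NeBot := ae_neBot.2 (IsProbabilityMeasure.ne_zero μ)
  obtain ⟨ω₀, hω₀⟩ := hWζ.exists
  set c : ℤ := ξ 0 ω₀ with hcdef
  have hζc : ζ = Complex.exp ((((2 * Real.pi / d) * (c : ℝ) : ℝ)) * Complex.I) := hω₀.symm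
  -- a.e. d ∣ ξ 0 ω - c
  have hξ0c : ∀ᵐ ω ∂μ, (d:ℤ) ∣ (ξ 0 ω - c) := by
    filter_upwards [hWζ] with ω hω
    have h2 : Complex.exp ((((2 * Real.pi / d) * (ξ 0 ω : ℝ) : ℝ)) * Complex.I)
        = Complex.exp ((((2 * Real.pi / d) * (c : ℝ) : ℝ)) * Complex.I) := by
      rw [← hζc]; exact hω
    rw [Complex.exp_eq_exp_iff_exists_int] at h2
    obtain ⟨m, hm⟩ := h2
    have him := congrArg Complex.im hm
    simp only [Complex.add_im, Complex.mul_im, Complex.ofReal_re, Complex.I_im, Complex.ofReal_im,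
      Complex.I_re, mul_zero, mul_one, zero_mul, add_zero, zero_add, Complex.intCast_im,
      Complex.intCast_re, Complex.mul_re, Complex.re_ofNat, Complex.im_ofNat, sub_zero] at him
    refine ⟨m, ?_⟩
    have hreal : ((ξ 0 ω - c : ℤ):ℝ) = (d:ℝ) * (m:ℝ) := by
      push_cast
      have hπne : Real.pi ≠ 0 := ne_of_gt hπ
      field_simp at him
      nlinarith [him]
    exact_mod_cast hreal
  -- ζ ^ d = 1
  have hζd : ζ ^ d = 1 := by
    rw [hζc, ← Complex.exp_nat_mul]
    rw [show (d:ℂ) * ((((2 * Real.pi / d) * (c : ℝ) : ℝ)) * Complex.I)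
        = (c:ℂ) * (2 * (Real.pi:ℂ) * Complex.I) by push_cast; field_simp [hdC]]
    exact Complex.exp_int_mul_two_pi_mul_I c
  -- transfer to all y
  have hally : ∀ y : ℤ, ∀ᵐ ω ∂μ, (d:ℤ) ∣ (ξ y ω - c) := by
    intro y
    have hid := hident y
    have hmeq := hid.measure_mem_eq (s := {z : ℤ | ¬ (d:ℤ) ∣ (z - c)}) (MeasurableSet.of_discrete)
    rw [ae_iff] at hξ0c ⊢
    have e1 : {ω | ¬ (d:ℤ) ∣ (ξ y ω - c)} = ξ y ⁻¹' {z : ℤ | ¬ (d:ℤ) ∣ (z - c)} := rfl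
    have e2 : {ω | ¬ (d:ℤ) ∣ (ξ 0 ω - c)} = ξ 0 ⁻¹' {z : ℤ | ¬ (d:ℤ) ∣ (z - c)} := rfl
    rw [e1, hmeq, ← e2]
    exact hξ0c
  have hall : ∀ᵐ ω ∂μ, ∀ y : ℤ, (d:ℤ) ∣ (ξ y ω - c) := ae_all_iff.2 hally
  -- a.e. d ∣ Z - c * n
  have hZmod : ∀ᵐ ω ∂μ, (d:ℤ) ∣ (Z ω - c * n) := by
    filter_upwards [hall] with ω h
    have hcn : (c * n : ℤ) = ∑ y ∈ N.support, c * (N y : ℤ) := by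
      rw [← Finset.mul_sum]
      congr 1
      exact_mod_cast hn.symm
    rw [hZ ω, hcn, ← Finset.sum_sub_distrib]
    apply Finset.dvd_sum
    intro y _
    have : ξ y ω * (N y:ℤ) - c * (N y:ℤ) = (ξ y ω - c) * (N y:ℤ) := by ring
    rw [this]
    exact Dvd.dvd.mul_right (h y) _
  constructor
  · -- case 1
    intro h1
    have hx : ¬ (d:ℤ) ∣ ((n:ℤ) * c - x) := by
      obtain ⟨ω₁, hA, hB⟩ := (h1.and hξ0c).exists
      intro hdvd
      apply hA
      have e : (n:ℤ) * ξ 0 ω₁ - x = (n:ℤ) * (ξ 0 ω₁ - c) + ((n:ℤ) * c - x) := by ring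
      rw [e]
      exact dvd_add (Dvd.dvd.mul_left hB _) hdvd
    have hnull : μ {ω | ¬ (d:ℤ) ∣ (Z ω - c * n)} = 0 := ae_iff.1 hZmod
    apply measure_mono_null _ hnull
    intro ω hω
    simp only [Set.mem_setOf_eq] at hω ⊢
    rw [hω]
    intro hdvd
    apply hx
    have e : (n:ℤ) * c - x = -(x - c * n) := by ring
    rw [e]
    exact (dvd_neg).2 hdvd
  · -- case 2
    intro h2
    have hdvd2 : (d:ℤ) ∣ ((n:ℤ) * c - x) := by
      obtain ⟨ω₁, hA, hB⟩ := (h2.and hξ0c).exists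
      have e : (n:ℤ) * c - x = ((n:ℤ) * ξ 0 ω₁ - x) - (n:ℤ) * (ξ 0 ω₁ - c) := by ring
      rw [e]
      exact dvd_sub hA (Dvd.dvd.mul_left hB _)
    -- measurability and boundedness of φ
    have hφmeas : Measurable φ := by
      have hH : StronglyMeasurable fun p : ℝ × Ω =>
          Complex.exp (((p.1 * (ξ 0 p.2 : ℝ)):ℝ) * Complex.I) := by
        apply Measurable.stronglyMeasurable
        apply Complex.measurable_exp.comp
        exact (Complex.measurable_ofReal.comp (measurable_fst.mul
          ((Measurable.of_discrete (f := fun z : ℤ => (z:ℝ))).comp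
            ((hmeas 0).comp measurable_snd)))).mul_const _
      have hSM := MeasureTheory.StronglyMeasurable.integral_prod_right' (ν := μ) hH
      have hfe : φ = fun u => ∫ ω, Complex.exp (((u * (ξ 0 ω : ℝ)):ℝ) * Complex.I) ∂μ := funext hφ
      rw [hfe]
      exact hSM.measurable
    have hφbd : ∀ u, ‖φ u‖ ≤ 1 := by
      intro u
      rw [hφ]
      have := norm_integral_le_of_norm_le_const (μ := μ) (C := 1)
        (f := fun ω => Complex.exp (((u * (ξ 0 ω : ℝ)):ℝ) * Complex.I))
        (ae_of_all _ fun ω => by rw [Complex.norm_exp_ofReal_mul_I])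
      simpa using this
    -- shift identity
    have hshift : ∀ (k : ℕ) (v : ℝ), φ (v + 2 * Real.pi * k / d) = ζ ^ k * φ v := by
      intro k v
      rw [hφ, hφ, ← integral_const_mul]
      apply integral_congr_ae
      filter_upwards [hWζ] with ω hω
      have e : ((v + 2 * Real.pi * k / d) * (ξ 0 ω:ℝ) : ℝ)
          = (v * (ξ 0 ω:ℝ)) + (k:ℝ) * ((2 * Real.pi / d) * (ξ 0 ω:ℝ)) := by
        field_simp
      rw [e, Complex.ofReal_add, add_mul, Complex.exp_add]
      rw [show (((k:ℝ) * ((2 * Real.pi / d) * (ξ 0 ω:ℝ)):ℝ):ℂ) * Complex.I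
          = (k:ℂ) * (((((2 * Real.pi / d) * (ξ 0 ω:ℝ)):ℝ):ℂ) * Complex.I) by push_cast; ring]
      rw [Complex.exp_nat_mul, hω]
      ring
    -- characteristic function of Z
    have hψ : ∀ t : ℝ, (∫ ω, Complex.exp (((t * (Z ω : ℝ)):ℝ) * Complex.I) ∂μ)
        = ∏ y ∈ N.support, φ (t * (N y:ℝ)) := by
      intro t
      set g : ℤ → ℤ → ℂ :=
        fun y z => Complex.exp ((((t * (N y:ℝ)) * (z:ℝ)):ℝ) * Complex.I) with hgdef
      have hgy : ∀ y z, g y z = Complex.exp ((((t * (N y:ℝ)) * (z:ℝ)):ℝ) * Complex.I) :=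
        fun y z => rfl
      have e1 : ∀ ω, Complex.exp (((t * (Z ω : ℝ)):ℝ) * Complex.I)
          = ∏ y ∈ N.support, g y (ξ y ω) := by
        intro ω
        simp only [hgy]
        rw [← Complex.exp_sum]
        congr 1
        rw [hZ ω]
        push_cast
        rw [Finset.mul_sum, Finset.sum_mul]
        exact Finset.sum_congr rfl fun y _ => by push_cast; ring
      calc ∫ ω, Complex.exp (((t * (Z ω : ℝ)):ℝ) * Complex.I) ∂μ
          = ∫ ω, ∏ y ∈ N.support, g y (ξ y ω) ∂μ := integral_congr_ae (ae_of_all _ e1)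
        _ = ∏ y ∈ N.support, ∫ ω, g y (ξ y ω) ∂μ :=
            my_indep_integral_prod μ ξ hmeas hindep g N.support
        _ = ∏ y ∈ N.support, φ (t * (N y:ℝ)) := by
            apply Finset.prod_congr rfl
            intro y _
            have hid := (hident y).comp (Measurable.of_discrete (f := g y))
            have hie : ∫ ω, g y (ξ y ω) ∂μ = ∫ ω, g y (ξ 0 ω) ∂μ := hid.integral_eq
            rw [hie, hgdef, hφ (t * (N y:ℝ))]
    -- Fubini / inversion over (-π, π]
    haveI hfin : IsFiniteMeasure (volume.restrict (Set.Ioc (-Real.pi) Real.pi)) :=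
      ⟨by rw [Measure.restrict_apply_univ]; exact measure_Ioc_lt_top⟩
    have hGmeas : Measurable (fun p : ℝ × Ω =>
        Complex.exp (((p.1 * ((Z p.2 - x : ℤ):ℝ)):ℝ) * Complex.I)) := by
      apply Complex.measurable_exp.comp
      apply Measurable.mul_const
      apply Complex.measurable_ofReal.comp
      exact measurable_fst.mul ((Measurable.of_discrete (f := fun z : ℤ => (z:ℝ))).comp
        ((hZmeas.sub measurable_const).comp measurable_snd))
    have hGint : Integrable (Function.uncurry fun (t:ℝ) (ω:Ω) =>
        Complex.exp (((t * ((Z ω - x : ℤ):ℝ)):ℝ) * Complex.I))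
        ((volume.restrict (Set.Ioc (-Real.pi) Real.pi)).prod μ) := by
      have he : (Function.uncurry fun (t:ℝ) (ω:Ω) =>
          Complex.exp (((t * ((Z ω - x : ℤ):ℝ)):ℝ) * Complex.I))
          = fun p : ℝ × Ω => Complex.exp (((p.1 * ((Z p.2 - x : ℤ):ℝ)):ℝ) * Complex.I) := rfl
      rw [he]
      apply (integrable_const (1:ℝ)).mono' hGmeas.aestronglyMeasurable
      apply ae_of_all
      intro p
      rw [Complex.norm_exp_ofReal_mul_I]
    have hinner : ∀ ω, (∫ t in Set.Ioc (-Real.pi) Real.pi,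
        Complex.exp (((t * ((Z ω - x:ℤ):ℝ)):ℝ) * Complex.I))
        = if Z ω = x then ((2 * Real.pi:ℝ):ℂ) else 0 := by
      intro ω
      rw [← intervalIntegral.integral_of_le (by linarith : -Real.pi ≤ Real.pi)]
      by_cases hωx : Z ω = x
      · simp only [hωx, sub_self, Int.cast_zero, mul_zero, Complex.ofReal_zero, zero_mul,
          Complex.exp_zero, if_true, ite_true, if_pos]
        rw [intervalIntegral.integral_const, Complex.real_smul]
        push_cast
        ring
      · have hm0 : (Z ω - x : ℤ) ≠ 0 := sub_ne_zero.2 hωx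
        have hc0 : ((Z ω - x:ℤ):ℂ) * Complex.I ≠ 0 :=
          mul_ne_zero (Int.cast_ne_zero.2 hm0) Complex.I_ne_zero
        have e : ∀ t : ℝ, (((t * ((Z ω - x:ℤ):ℝ)):ℝ):ℂ) * Complex.I
            = (((Z ω - x:ℤ):ℂ) * Complex.I) * (t:ℂ) := by intro t; push_cast; ring
        simp_rw [e]
        rw [integral_exp_mul_complex hc0]
        have heq : Complex.exp ((((Z ω - x:ℤ):ℂ) * Complex.I) * (Real.pi:ℂ))
            = Complex.exp ((((Z ω - x:ℤ):ℂ) * Complex.I) * ((-Real.pi:ℝ):ℂ)) := by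
          rw [show (((Z ω - x:ℤ):ℂ) * Complex.I) * (Real.pi:ℂ)
              = (((Z ω - x:ℤ):ℂ) * Complex.I) * ((-Real.pi:ℝ):ℂ)
                + ((Z ω - x:ℤ):ℂ) * (2 * (Real.pi:ℂ) * Complex.I) by push_cast; ring]
          rw [Complex.exp_add, Complex.exp_int_mul_two_pi_mul_I, mul_one]
        rw [if_neg hωx, heq]
        simp
    have hswap : (∫ t in Set.Ioc (-Real.pi) Real.pi,
        (∫ ω, Complex.exp (((t * ((Z ω - x:ℤ):ℝ)):ℝ) * Complex.I) ∂μ))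
        = ∫ ω, (∫ t in Set.Ioc (-Real.pi) Real.pi,
          Complex.exp (((t * ((Z ω - x:ℤ):ℝ)):ℝ) * Complex.I)) ∂μ :=
      integral_integral_swap hGint
    have hright : ∫ ω, (if Z ω = x then ((2 * Real.pi:ℝ):ℂ) else 0) ∂μ
        = ((μ {ω | Z ω = x}).toReal : ℂ) * ((2 * Real.pi:ℝ):ℂ) := by
      have hite : (fun ω => if Z ω = x then ((2 * Real.pi:ℝ):ℂ) else 0)
          = Set.indicator {ω | Z ω = x} (fun _ => ((2 * Real.pi:ℝ):ℂ)) := by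
        funext ω
        by_cases h : Z ω = x
        · simp [Set.indicator_apply, h]
        · simp [Set.indicator_apply, h]
      rw [hite, integral_indicator_const _
        (show MeasurableSet {ω | Z ω = x} from hZmeas (measurableSet_singleton x))]
      rw [Complex.real_smul]
      rfl
    have hFint_eq : ∀ t:ℝ, Complex.exp ((-(t * (x:ℝ)):ℝ) * Complex.I)
        * ∏ y ∈ N.support, φ (t * (N y:ℝ))
        = ∫ ω, Complex.exp (((t * ((Z ω - x:ℤ):ℝ)):ℝ) * Complex.I) ∂μ := by
      intro t
      rw [← hψ t, ← integral_const_mul]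
      apply integral_congr_ae
      apply ae_of_all
      intro ω
      beta_reduce
      rw [← Complex.exp_add]
      congr 1
      push_cast
      ring
    have hmain : (∫ t in Set.Ioc (-Real.pi) Real.pi,
        (Complex.exp ((-(t * (x:ℝ)):ℝ) * Complex.I) * ∏ y ∈ N.support, φ (t * (N y:ℝ))))
        = ((μ {ω | Z ω = x}).toReal : ℂ) * ((2 * Real.pi:ℝ):ℂ) := by
      calc (∫ t in Set.Ioc (-Real.pi) Real.pi,
          (Complex.exp ((-(t * (x:ℝ)):ℝ) * Complex.I) * ∏ y ∈ N.support, φ (t * (N y:ℝ))))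
          = ∫ t in Set.Ioc (-Real.pi) Real.pi,
            (∫ ω, Complex.exp (((t * ((Z ω - x:ℤ):ℝ)):ℝ) * Complex.I) ∂μ) := by
            simp_rw [hFint_eq]
        _ = ∫ ω, (∫ t in Set.Ioc (-Real.pi) Real.pi,
            Complex.exp (((t * ((Z ω - x:ℤ):ℝ)):ℝ) * Complex.I)) ∂μ := hswap
        _ = ∫ ω, (if Z ω = x then ((2 * Real.pi:ℝ):ℂ) else 0) ∂μ := by simp_rw [hinner]
        _ = ((μ {ω | Z ω = x}).toReal : ℂ) * ((2 * Real.pi:ℝ):ℂ) := hright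
    -- F and periodicity
    set F : ℝ → ℂ := fun t => Complex.exp ((-(t * (x:ℝ)):ℝ) * Complex.I)
      * ∏ y ∈ N.support, φ (t * (N y:ℝ)) with hFdef
    have hFu : ∀ u : ℝ, F u = Complex.exp ((-(u * (x:ℝ)):ℝ) * Complex.I)
        * ∏ y ∈ N.support, φ (u * (N y:ℝ)) := fun u => rfl
    have hω1 : Complex.exp (((-(2 * Real.pi * (x:ℝ) / d)):ℝ) * Complex.I) * ζ ^ n = 1 := by
      obtain ⟨j, hj⟩ := hdvd2
      have hj' : (n:ℝ) * (c:ℝ) - (x:ℝ) = (d:ℝ) * (j:ℝ) := by exact_mod_cast hj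
      rw [hζc, ← Complex.exp_nat_mul, ← Complex.exp_add]
      rw [show (((-(2 * Real.pi * (x:ℝ) / d)):ℝ):ℂ) * Complex.I
          + (n:ℂ) * (((((2 * Real.pi / d) * (c : ℝ)):ℝ):ℂ) * Complex.I)
          = (j:ℂ) * (2 * (Real.pi:ℂ) * Complex.I) from ?_]
      · exact Complex.exp_int_mul_two_pi_mul_I j
      · push_cast
        have : ((n:ℂ) * (c:ℂ) - (x:ℂ)) = (d:ℂ) * (j:ℂ) := by exact_mod_cast hj
        field_simp [hdC]
        linear_combination this
    have hperiod : Function.Periodic F (2 * Real.pi / d) := by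
      intro u
      have hprod : ∏ y ∈ N.support, φ ((u + 2 * Real.pi / d) * (N y:ℝ))
          = ζ ^ n * ∏ y ∈ N.support, φ (u * (N y:ℝ)) := by
        have hterm : ∀ y ∈ N.support, φ ((u + 2 * Real.pi / d) * (N y:ℝ))
            = ζ ^ (N y) * φ (u * (N y:ℝ)) := by
          intro y _
          have hs := hshift (N y) (u * (N y:ℝ))
          rw [← hs]
          congr 1
          field_simp
        rw [Finset.prod_congr rfl hterm, Finset.prod_mul_distrib, ← hn,
          ← Finset.prod_pow_eq_pow_sum]
      have hexp : Complex.exp ((-((u + 2 * Real.pi / d) * (x:ℝ)):ℝ) * Complex.I)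
          = Complex.exp ((-(u * (x:ℝ)):ℝ) * Complex.I)
            * Complex.exp (((-(2 * Real.pi * (x:ℝ) / d)):ℝ) * Complex.I) := by
        rw [← Complex.exp_add]
        congr 1
        push_cast
        ring
      show F (u + 2 * Real.pi / d) = F u
      rw [hFu, hFu, hexp, hprod]
      have : Complex.exp ((-(u * (x:ℝ)):ℝ) * Complex.I)
          * Complex.exp (((-(2 * Real.pi * (x:ℝ) / d)):ℝ) * Complex.I)
          * (ζ ^ n * ∏ y ∈ N.support, φ (u * (N y:ℝ)))
          = (Complex.exp (((-(2 * Real.pi * (x:ℝ) / d)):ℝ) * Complex.I) * ζ ^ n)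
          * (Complex.exp ((-(u * (x:ℝ)):ℝ) * Complex.I) * ∏ y ∈ N.support, φ (u * (N y:ℝ))) := by
        ring
      rw [this, hω1, one_mul]

    have hperiod2 : Function.Periodic F (2 * Real.pi) := by
      have hnm := hperiod.nat_mul d
      rwa [show (d:ℝ) * (2 * Real.pi / d) = 2 * Real.pi by field_simp] at hnm
    have h_int : ∀ t₁ t₂ : ℝ, IntervalIntegrable F MeasureTheory.volume t₁ t₂ := by
      intro t₁ t₂
      have hFm : Measurable F := by
        rw [hFdef]
        apply Measurable.mul
        · exact Complex.measurable_exp.comp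
            ((Complex.measurable_ofReal.comp (measurable_id.mul_const _).neg).mul_const _)
        · exact Finset.measurable_prod _ fun y _ => hφmeas.comp (measurable_id.mul_const _)
      have hFb : ∀ t, ‖F t‖ ≤ 1 := by
        intro t
        rw [hFu]
        rw [norm_mul, Complex.norm_exp_ofReal_mul_I, one_mul]
        calc ‖∏ y ∈ N.support, φ (t * (N y:ℝ))‖ ≤ ∏ y ∈ N.support, ‖φ (t * (N y:ℝ))‖ :=
            le_of_eq (norm_prod _ _)
          _ ≤ 1 := Finset.prod_le_one (fun y _ => norm_nonneg _) (fun y _ => hφbd _)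
      rw [intervalIntegrable_iff]
      haveI : IsFiniteMeasure (volume.restrict (Set.uIoc t₁ t₂)) :=
        ⟨by rw [Measure.restrict_apply_univ, Set.uIoc]; exact measure_Ioc_lt_top⟩
      exact (integrable_const (1:ℝ)).mono' hFm.aestronglyMeasurable (ae_of_all _ hFb)
    have hsplit : ∫ t in (-Real.pi)..Real.pi, F t
        = (d:ℂ) * ∫ t in (-(Real.pi/d))..(Real.pi/d), F t := by
      have e1 : ∫ t in (-Real.pi)..Real.pi, F t
          = ∫ t in (-Real.pi)..(-Real.pi + 2 * Real.pi), F t := by congr 1; ring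
      have e2 := hperiod2.intervalIntegral_add_eq (-Real.pi) (-(Real.pi/d))
      have e3 := hperiod.intervalIntegral_add_zsmul_eq (d:ℤ) (-(Real.pi/d)) h_int
      rw [e1, e2]
      rw [show -(Real.pi/d) + 2 * Real.pi = -(Real.pi/d) + (d:ℤ) • (2 * Real.pi / d) by
        rw [zsmul_eq_mul]; push_cast; field_simp]
      rw [e3]
      rw [show -(Real.pi/d) + 2 * Real.pi / d = Real.pi/d by ring]
      rw [zsmul_eq_mul]
      push_cast
      ring
    have hle : -(Real.pi/d) ≤ Real.pi/d := by
      have := div_pos hπ hd0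
      linarith
    have hIoc1 : (∫ t in Set.Ioc (-(Real.pi/d)) (Real.pi/d), F t)
        = ∫ t in (-(Real.pi/d))..(Real.pi/d), F t :=
      (intervalIntegral.integral_of_le hle).symm
    have hIoc2 : (∫ t in Set.Ioc (-Real.pi) Real.pi, F t)
        = ∫ t in (-Real.pi)..Real.pi, F t :=
      (intervalIntegral.integral_of_le (by linarith)).symm
    have hmain' : ((μ {ω | Z ω = x}).toReal : ℂ) * ((2 * Real.pi:ℝ):ℂ)
        = (d:ℂ) * ∫ t in Set.Ioc (-(Real.pi/d)) (Real.pi/d), F t := by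
      rw [← hmain, hIoc2, hsplit, hIoc1]
    have h2π : ((2:ℂ) * (Real.pi:ℂ)) ≠ 0 := by
      simp [Real.pi_ne_zero, Complex.ofReal_ne_zero]
    rw [div_mul_eq_mul_div, eq_div_iff h2π]
    push_cast at hmain' ⊢
    linear_combination hmain'
end
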